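/- For all integers N ≥ 5 and k with 1 ≤ k ≤ N/4, e^z (1 + z/(e^z-1))^2 evaluated at z = -k·ln(1-1/N) is at most its value at z = -(N/4)·ln(1-1/N), which is at most its value at z = -(5/4)·ln(4/5), and the latter is < 4.7. -/

import Mathlib

open Real

/-- exp x ≤ (1-x)⁻¹ for 0 ≤ x < 1 -/
lemma aux_exp_le_inv_one_sub {x : ℝ} (h1 : x < 1) : Real.exp x ≤ (1 - x)⁻¹ := by
  have h2 : 0 < 1 - x := by linarith
  have h3 : (1 - x) * Real.exp x ≤ 1 := by
    have := Real.add_one_le_exp (-x)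
    have h4 : (1 - x) ≤ Real.exp (-x) := by linarith
    calc (1 - x) * Real.exp x ≤ Real.exp (-x) * Real.exp x :=
          mul_le_mul_of_nonneg_right h4 (Real.exp_pos x).le
      _ = 1 := by rw [← Real.exp_add]; simp
  rw [inv_eq_one_div, le_div_iff₀ h2]
  linarith [h3]

/-- The function g(x) = -log(1-x)/x is monotone on (0,1). -/
lemma aux_g_mono : MonotoneOn (fun x : ℝ => -Real.log (1 - x) / x) (Set.Ioo (0:ℝ) 1) := by
  have hderiv : ∀ x ∈ Set.Ioo (0:ℝ) 1,
      HasDerivAt (fun x : ℝ => -Real.log (1 - x) / x)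
        (((1 - x)⁻¹ * x - (-Real.log (1 - x)) * 1) / x ^ 2) x := by
    intro x hx
    obtain ⟨hx0, hx1⟩ := hx
    have hne : 1 - x ≠ 0 := by linarith
    have hlog : HasDerivAt (fun x : ℝ => -Real.log (1 - x)) ((1 - x)⁻¹) x := by
      have h1 : HasDerivAt (fun x : ℝ => 1 - x) (-1) x := by
        simpa using (hasDerivAt_id x).const_sub 1
      have h2 := (Real.hasDerivAt_log hne).comp x h1
      have h3 := h2.neg
      rw [show (1 - x)⁻¹ = -((1 - x)⁻¹ * -1) by ring]
      exact h3
    exact hlog.div (hasDerivAt_id x) (by linarith)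
  apply monotoneOn_of_deriv_nonneg (convex_Ioo 0 1)
  · intro x hx
    exact ((hderiv x hx).differentiableAt).continuousAt.continuousWithinAt
  · rw [interior_Ioo]
    intro x hx
    exact ((hderiv x hx).differentiableAt).differentiableWithinAt
  · rw [interior_Ioo]
    intro x hx
    rw [(hderiv x hx).deriv]
    obtain ⟨hx0, hx1⟩ := hx
    have hne : (0:ℝ) < 1 - x := by linarith
    -- need (1-x)⁻¹ * x + log (1-x) ≥ 0, i.e. -log(1-x) ≤ x/(1-x)
    have key : -Real.log (1 - x) ≤ x / (1 - x) := by
      have h1 : Real.log (1 - x) = -Real.log ((1 - x)⁻¹) := by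
        rw [Real.log_inv]; ring
      rw [h1, neg_neg]
      have h2 : Real.log ((1 - x)⁻¹) ≤ (1 - x)⁻¹ - 1 :=
        Real.log_le_sub_one_of_pos (by positivity)
      have h3 : (1 - x)⁻¹ - 1 = x / (1 - x) := by field_simp; ring
      linarith [h2, h3.le]
    have hxx : (1 - x)⁻¹ * x = x / (1 - x) := by field_simp
    have : 0 ≤ (1 - x)⁻¹ * x - (-Real.log (1 - x)) * 1 := by
      rw [hxx]; linarith
    positivity

/-- φ is monotone on (0, ∞). -/
lemma aux_phi_mono :
    MonotoneOn (fun z : ℝ => Real.exp z * (1 + z / (Real.exp z - 1)) ^ 2) (Set.Ioi (0:ℝ)) := by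
  set φ : ℝ → ℝ := fun z => Real.exp z * (1 + z / (Real.exp z - 1)) ^ 2 with hφ
  have hderiv : ∀ z ∈ Set.Ioi (0:ℝ), HasDerivAt φ
      (Real.exp z * (1 + z / (Real.exp z - 1)) ^ 2 +
        Real.exp z * ((2:ℕ) * (1 + z / (Real.exp z - 1)) ^ 1 *
          ((1 * (Real.exp z - 1) - z * Real.exp z) / (Real.exp z - 1) ^ 2))) z := by
    intro z hz
    have hz0 : (0:ℝ) < z := hz
    have hE : (1:ℝ) < Real.exp z := by
      have := Real.add_one_le_exp z; linarith
    have hEne : Real.exp z - 1 ≠ 0 := by linarith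
    have h1 : HasDerivAt (fun z : ℝ => Real.exp z - 1) (Real.exp z) z :=
      (Real.hasDerivAt_exp z).sub_const 1
    have h2 : HasDerivAt (fun z : ℝ => z / (Real.exp z - 1))
        ((1 * (Real.exp z - 1) - z * Real.exp z) / (Real.exp z - 1) ^ 2) z :=
      (hasDerivAt_id z).div h1 hEne
    have h3 := (h2.const_add 1).pow 2
    exact (Real.hasDerivAt_exp z).mul h3
  apply monotoneOn_of_deriv_nonneg (convex_Ioi 0)
  · intro z hz
    exact ((hderiv z hz).differentiableAt).continuousAt.continuousWithinAt
  · rw [interior_Ioi]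
    intro z hz
    exact ((hderiv z hz).differentiableAt).differentiableWithinAt
  · rw [interior_Ioi]
    intro z hz
    rw [(hderiv z hz).deriv]
    have hz0 : (0:ℝ) < z := hz
    have hE : (1:ℝ) + z ≤ Real.exp z := by
      have := Real.add_one_le_exp z; linarith
    have hE1 : (1:ℝ) < Real.exp z := by linarith
    have hEpos : (0:ℝ) < Real.exp z - 1 := by linarith
    have hEne : Real.exp z - 1 ≠ 0 := ne_of_gt hEpos
    have hfact : Real.exp z * (1 + z / (Real.exp z - 1)) ^ 2 +
        Real.exp z * ((2:ℕ) * (1 + z / (Real.exp z - 1)) ^ 1 *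
          ((1 * (Real.exp z - 1) - z * Real.exp z) / (Real.exp z - 1) ^ 2)) =
        Real.exp z * (1 + z / (Real.exp z - 1)) *
          ((Real.exp z + 1) * (Real.exp z - 1 - z)) / (Real.exp z - 1) ^ 2 := by
      field_simp
      ring
    rw [hfact]
    have h1 : 0 ≤ 1 + z / (Real.exp z - 1) := by positivity
    have h2 : 0 ≤ Real.exp z - 1 - z := by linarith
    have h3 : 0 ≤ Real.exp z + 1 := by positivity
    positivity

/-- (1 + x/64)^64 ≤ exp x for 0 ≤ x -/
lemma aux_exp_lb {x : ℝ} (hx : 0 ≤ x) : (1 + x / 64) ^ (64:ℕ) ≤ Real.exp x := by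
  have h1 : 1 + x / 64 ≤ Real.exp (x / 64) := by
    have := Real.add_one_le_exp (x / 64); linarith
  have h2 : (1 + x / 64) ^ (64:ℕ) ≤ Real.exp (x / 64) ^ (64:ℕ) :=
    pow_le_pow_left₀ (by positivity) h1 64
  calc (1 + x / 64) ^ (64:ℕ) ≤ Real.exp (x / 64) ^ (64:ℕ) := h2
    _ = Real.exp ((64:ℕ) * (x / 64)) := (Real.exp_nat_mul _ 64).symm
    _ = Real.exp x := by push_cast; ring_nf

/-- exp x ≤ (1 - x/64)⁻¹ ^ 64 for 0 ≤ x < 64 -/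
lemma aux_exp_ub {x : ℝ} (hx : 0 ≤ x) (hx1 : x < 64) : Real.exp x ≤ ((1 - x / 64)⁻¹) ^ (64:ℕ) := by
  have h1 : Real.exp (x / 64) ≤ (1 - x / 64)⁻¹ := aux_exp_le_inv_one_sub (by linarith)
  have h2 : Real.exp (x / 64) ^ (64:ℕ) ≤ ((1 - x / 64)⁻¹) ^ (64:ℕ) :=
    pow_le_pow_left₀ (Real.exp_pos _).le h1 64
  calc Real.exp x = Real.exp ((64:ℕ) * (x / 64)) := by push_cast; ring_nf
    _ = Real.exp (x / 64) ^ (64:ℕ) := Real.exp_nat_mul _ 64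
    _ ≤ _ := h2

lemma aux_log54_ub : Real.log (5/4) ≤ 0.224 := by
  rw [Real.log_le_iff_le_exp (by norm_num)]
  have h := aux_exp_lb (x := 0.224) (by norm_num)
  have : ((5:ℝ)/4) ≤ (1 + (0.224:ℝ) / 64) ^ (64:ℕ) := by
    have : (1 + (0.224:ℝ) / 64) = 2007/2000 := by norm_num
    rw [this]
    norm_num
  linarith

lemma aux_log54_lb : (0.2225:ℝ) ≤ Real.log (5/4) := by
  rw [Real.le_log_iff_exp_le (by norm_num)]
  have h := aux_exp_ub (x := 0.2225) (by norm_num) (by norm_num)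
  have h2 : (((1:ℝ) - (0.2225:ℝ) / 64)⁻¹) ^ (64:ℕ) ≤ 5/4 := by
    have e1 : ((1:ℝ) - (0.2225:ℝ) / 64) = 637775/640000 := by norm_num
    rw [e1, inv_pow]
    rw [inv_le_comm₀ (by positivity) (by norm_num)]
    have : ((5:ℝ)/4)⁻¹ = 4/5 := by norm_num
    rw [this]
    norm_num
  linarith

theorem phi_chain_lt (N k : ℕ) (hN : 5 ≤ N) (hk1 : 1 ≤ k) (hkN : (k:ℝ) ≤ (N:ℝ)/4) :
    let φ : ℝ → ℝ := fun z => Real.exp z * (1 + z / (Real.exp z - 1)) ^ 2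
    let z₁ : ℝ := -(k:ℝ) * Real.log (1 - 1/(N:ℝ))
    let z₂ : ℝ := -((N:ℝ)/4) * Real.log (1 - 1/(N:ℝ))
    let z₃ : ℝ := -(5/4 : ℝ) * Real.log (4/5 : ℝ)
    φ z₁ ≤ φ z₂ ∧ φ z₂ ≤ φ z₃ ∧ φ z₃ < 4.7 := by
  intro φ z₁ z₂ z₃
  have hN5 : (5:ℝ) ≤ (N:ℝ) := by exact_mod_cast hN
  have hNpos : (0:ℝ) < (N:ℝ) := by linarith
  have hinv : (0:ℝ) < 1 - 1/(N:ℝ) := by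
    rw [sub_pos, div_lt_one hNpos]; linarith
  have hinv1 : 1 - 1/(N:ℝ) < 1 := by
    have : (0:ℝ) < 1/(N:ℝ) := by positivity
    linarith
  have hL : Real.log (1 - 1/(N:ℝ)) < 0 := Real.log_neg hinv hinv1
  have hk : (1:ℝ) ≤ (k:ℝ) := by exact_mod_cast hk1
  -- positivity of the z's
  have hz1 : 0 < z₁ := by
    show 0 < -(k:ℝ) * Real.log (1 - 1/(N:ℝ))
    have : 0 < (k:ℝ) := by linarith
    nlinarith
  have hz12 : z₁ ≤ z₂ := by
    show -(k:ℝ) * Real.log (1 - 1/(N:ℝ)) ≤ -((N:ℝ)/4) * Real.log (1 - 1/(N:ℝ))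
    nlinarith
  -- z₂ ≤ z₃ via monotonicity of g
  have hz23 : z₂ ≤ z₃ := by
    have hmem1 : (1/(N:ℝ)) ∈ Set.Ioo (0:ℝ) 1 := by
      constructor
      · positivity
      · rw [div_lt_one hNpos]; linarith
    have hmem2 : ((1:ℝ)/5) ∈ Set.Ioo (0:ℝ) 1 := by norm_num
    have hle : (1/(N:ℝ)) ≤ 1/5 := by
      rw [div_le_div_iff₀ hNpos (by norm_num)]; linarith
    have := aux_g_mono hmem1 hmem2 hle
    simp only at this
    have e1 : -Real.log (1 - 1/(N:ℝ)) / (1/(N:ℝ)) = -(N:ℝ) * Real.log (1 - 1/(N:ℝ)) := by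
      field_simp
    have e2 : -Real.log (1 - (1:ℝ)/5) / ((1:ℝ)/5) = -(5:ℝ) * Real.log ((4:ℝ)/5) := by
      rw [show (1:ℝ) - 1/5 = 4/5 by norm_num]
      ring
    rw [e1, e2] at this
    show -((N:ℝ)/4) * Real.log (1 - 1/(N:ℝ)) ≤ -(5/4 : ℝ) * Real.log (4/5 : ℝ)
    linarith
  have hz2 : 0 < z₂ := lt_of_lt_of_le hz1 hz12
  have hz3 : 0 < z₃ := lt_of_lt_of_le hz2 hz23
  -- monotone chain
  have hmono := aux_phi_mono
  have c1 : φ z₁ ≤ φ z₂ := hmono hz1 hz2 hz12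
  have c2 : φ z₂ ≤ φ z₃ := hmono hz2 hz3 hz23
  refine ⟨c1, c2, ?_⟩
  -- numerics for φ z₃ < 4.7
  have hz3eq : z₃ = (5/4 : ℝ) * Real.log (5/4) := by
    show -(5/4 : ℝ) * Real.log (4/5 : ℝ) = (5/4 : ℝ) * Real.log (5/4)
    have : ((4:ℝ)/5) = ((5:ℝ)/4)⁻¹ := by norm_num
    rw [this, Real.log_inv]; ring
  have hz3u : z₃ ≤ 0.28 := by
    rw [hz3eq]
    have := aux_log54_ub
    nlinarith
  have hz3l : (0.278:ℝ) ≤ z₃ := by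
    rw [hz3eq]
    have := aux_log54_lb
    nlinarith
  -- exp bounds
  have hexpl : (1.319:ℝ) ≤ Real.exp z₃ := by
    have h1 : Real.exp (0.278:ℝ) ≤ Real.exp z₃ := Real.exp_le_exp.mpr hz3l
    have h2 := aux_exp_lb (x := 0.278) (by norm_num)
    have h3 : (1.319:ℝ) ≤ (1 + (0.278:ℝ)/64) ^ (64:ℕ) := by
      have e : (1 + (0.278:ℝ)/64) = 32139/32000 := by norm_num
      rw [e]; norm_num
    linarith
  have hexpu : Real.exp z₃ ≤ 1.324 := by
    have h1 : Real.exp z₃ ≤ Real.exp (0.28:ℝ) := Real.exp_le_exp.mpr hz3u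
    have h2 := aux_exp_ub (x := 0.28) (by norm_num) (by norm_num)
    have h3 : (((1:ℝ) - (0.28:ℝ)/64)⁻¹) ^ (64:ℕ) ≤ 1.324 := by
      have e : ((1:ℝ) - (0.28:ℝ)/64) = 1593/1600 := by norm_num
      rw [e, inv_pow]
      rw [inv_le_comm₀ (by positivity) (by norm_num)]
      norm_num
    linarith
  have hEpos : (0.319:ℝ) ≤ Real.exp z₃ - 1 := by linarith
  have hEpos' : (0:ℝ) < Real.exp z₃ - 1 := by linarith
  have hfrac : z₃ / (Real.exp z₃ - 1) ≤ (0.28:ℝ) / 0.319 := by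
    exact div_le_div₀ (by norm_num) hz3u (by norm_num) hEpos
  have hbase : (0:ℝ) ≤ 1 + z₃ / (Real.exp z₃ - 1) := by positivity
  have hsq : (1 + z₃ / (Real.exp z₃ - 1)) ^ 2 ≤ (1 + (0.28:ℝ)/0.319) ^ 2 := by
    apply pow_le_pow_left₀ hbase (by linarith) 2
  show Real.exp z₃ * (1 + z₃ / (Real.exp z₃ - 1)) ^ 2 < 4.7
  calc Real.exp z₃ * (1 + z₃ / (Real.exp z₃ - 1)) ^ 2
      ≤ (1.324:ℝ) * (1 + (0.28:ℝ)/0.319) ^ 2 := by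
        apply mul_le_mul hexpu hsq (by positivity) (by norm_num)
    _ < 4.7 := by norm_num
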